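/- Let C be a delay-free (n,k,δ) convolutional code over F_q. For every j ≥ 0, the j-th column distance satisfies d_j^c(C) ≤ (n−k)(j+1) + 1. -/

import Mathlib

open Polynomial Matrix

noncomputable def wtTrunc {F : Type*} [Field F] {n : ℕ} (j : ℕ)
    (v : Fin n → Polynomial F) : ℕ :=
  {p : ℕ × Fin n | p.1 ≤ j ∧ (v p.2).coeff p.1 ≠ 0}.ncard

noncomputable def wtFull {F : Type*} [Field F] {n : ℕ} (v : Fin n → Polynomial F) : ℕ :=
  {p : ℕ × Fin n | (v p.2).coeff p.1 ≠ 0}.ncard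

noncomputable def colDist {F : Type*} [Field F] {n : ℕ}
    (C : Submodule (Polynomial F) (Fin n → Polynomial F)) (j : ℕ) : ℕ :=
  sInf {w | ∃ v ∈ C, (fun t => (v t).coeff 0) ≠ (0 : Fin n → F) ∧ w = wtTrunc j v}

noncomputable def freeDist {F : Type*} [Field F] {n : ℕ}
    (C : Submodule (Polynomial F) (Fin n → Polynomial F)) : ℕ :=
  sInf {w | ∃ v ∈ C, v ≠ 0 ∧ w = wtFull v}

def IsEncoder {F : Type*} [Field F] {k n : ℕ}
    (C : Submodule (Polynomial F) (Fin n → Polynomial F))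
    (G : Matrix (Fin k) (Fin n) (Polynomial F)) : Prop :=
  LinearIndependent (Polynomial F) (fun i : Fin k => fun t => G i t) ∧
    Submodule.span (Polynomial F) (Set.range (fun i : Fin k => fun t => G i t)) = C

def IsDelayFree {F : Type*} [Field F] {k n : ℕ}
    (G : Matrix (Fin k) (Fin n) (Polynomial F)) : Prop :=
  LinearIndependent F (fun i : Fin k => fun t => (G i t).coeff 0)

noncomputable def codeDegree {F : Type*} [Field F] {k n : ℕ}
    (G : Matrix (Fin k) (Fin n) (Polynomial F)) : ℕ :=
  Finset.univ.sup fun φ : Fin k → Fin n => ((G.submatrix id φ).det).natDegree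

noncomputable def rowDegSum {F : Type*} [Field F] {k n : ℕ}
    (G : Matrix (Fin k) (Fin n) (Polynomial F)) : ℕ :=
  ∑ i : Fin k, Finset.univ.sup fun t : Fin n => (G i t).natDegree

noncomputable def Gcoeff {F : Type*} [Field F] {k n : ℕ}
    (G : Matrix (Fin k) (Fin n) (Polynomial F)) (i : ℕ) : Matrix (Fin k) (Fin n) F :=
  fun a b => (G a b).coeff i

/-! ### Auxiliary material -/

/-- Information-set lemma: a subspace `V` of `ι → F` admits a coordinate set of size at most
`finrank V` on which vanishing forces an element of `V` to be zero. -/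
lemma infoSetAux {F : Type*} [Field F] {ι : Type*} [Fintype ι] :
    ∀ (d : ℕ) (V : Submodule F (ι → F)), Module.finrank F ↥V ≤ d →
      ∃ S : Finset ι, S.card ≤ Module.finrank F ↥V ∧
        ∀ v ∈ V, (∀ i ∈ S, v i = 0) → v = 0 := by
  classical
  intro d
  induction d with
  | zero =>
    intro V hV
    have hbot : V = ⊥ := Submodule.finrank_eq_zero.mp (Nat.le_zero.mp hV)
    exact ⟨∅, by simp, fun v hv _ => by simpa [hbot] using hv⟩
  | succ m ih =>
    intro V hV
    by_cases hbot : V = ⊥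
    · exact ⟨∅, by simp, fun v hv _ => by simpa [hbot] using hv⟩
    · obtain ⟨v, hvV, hv0⟩ := Submodule.exists_mem_ne_zero_of_ne_bot hbot
      obtain ⟨i, hi⟩ : ∃ i, v i ≠ 0 := by
        by_contra h
        push_neg at h
        exact hv0 (funext h)
      have hvnot : v ∉ V ⊓ LinearMap.ker (LinearMap.proj i : (ι → F) →ₗ[F] F) := by
        intro hmem
        rw [Submodule.mem_inf, LinearMap.mem_ker] at hmem
        exact hi hmem.2
      have hlt : V ⊓ LinearMap.ker (LinearMap.proj i : (ι → F) →ₗ[F] F) < V :=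
        lt_of_le_of_ne inf_le_left (fun h => hvnot (h.symm ▸ hvV))
      have hfr : Module.finrank F
          ↥(V ⊓ LinearMap.ker (LinearMap.proj i : (ι → F) →ₗ[F] F)) < Module.finrank F ↥V :=
        Submodule.finrank_lt_finrank_of_lt hlt
      obtain ⟨S', hS'c, hS'⟩ :=
        ih (V ⊓ LinearMap.ker (LinearMap.proj i : (ι → F) →ₗ[F] F)) (by omega)
      refine ⟨insert i S', ?_, ?_⟩
      · calc (insert i S').card ≤ S'.card + 1 := Finset.card_insert_le _ _
          _ ≤ Module.finrank F ↥V := by omega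
      · intro w hw h0
        refine hS' w ?_ (fun i' hi' => h0 i' (Finset.mem_insert_of_mem hi'))
        rw [Submodule.mem_inf, LinearMap.mem_ker]
        exact ⟨hw, by simpa using h0 i (Finset.mem_insert_self i S')⟩

/-- Truncation at degree `j`, as an `F`-linear map. -/
noncomputable def TrL (F : Type*) [Field F] (n j : ℕ) :
    (Fin n → Polynomial F) →ₗ[F] ((Fin (j+1) × Fin n) → F) where
  toFun v := fun p => (v p.2).coeff (p.1 : ℕ)
  map_add' v w := by funext p; simp
  map_smul' c v := by funext p; simp

/-- The shifted generator rows `z^a · G_i`. -/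
noncomputable def bFam {F : Type*} [Field F] {k n : ℕ} (j : ℕ)
    (G : Matrix (Fin k) (Fin n) (Polynomial F)) :
    (Fin (j+1) × Fin k) → (Fin n → Polynomial F) :=
  fun q t => G q.2 t * X ^ (q.1 : ℕ)

/-- The truncated encoding map. -/
noncomputable def PhiL {F : Type*} [Field F] {k n : ℕ} (j : ℕ)
    (G : Matrix (Fin k) (Fin n) (Polynomial F)) :
    ((Fin (j+1) × Fin k) → F) →ₗ[F] ((Fin (j+1) × Fin n) → F) :=
  (TrL F n j).comp (Fintype.linearCombination F (bFam j G))

lemma PhiL_apply {F : Type*} [Field F] {k n : ℕ} (j : ℕ)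
    (G : Matrix (Fin k) (Fin n) (Polynomial F)) (c : (Fin (j+1) × Fin k) → F)
    (a : Fin (j+1)) (t : Fin n) :
    PhiL j G c (a, t) = ∑ q : Fin (j+1) × Fin k,
      c q * (if (q.1 : ℕ) ≤ (a : ℕ) then (G q.2 t).coeff ((a : ℕ) - (q.1 : ℕ)) else 0) := by
  show ((Fintype.linearCombination F (bFam j G) c) t).coeff (a : ℕ) = _
  rw [Fintype.linearCombination_apply, Finset.sum_apply, Polynomial.finset_sum_coeff]
  refine Finset.sum_congr rfl fun q _ => ?_
  simp [bFam, Polynomial.coeff_smul, smul_eq_mul, Polynomial.coeff_mul_X_pow', mul_ite, mul_zero]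

theorem stmt8 {F : Type*} [Field F] [Fintype F] {n k δ : ℕ} (hkn : k ≤ n)
    (C : Submodule (Polynomial F) (Fin n → Polynomial F))
    (G : Matrix (Fin k) (Fin n) (Polynomial F))
    (hG : IsEncoder C G) (hdf : IsDelayFree G) (hdeg : codeDegree G = δ) :
    ∀ j : ℕ, colDist C j ≤ (n - k) * (j + 1) + 1 := by
  intro j
  classical
  rcases Nat.eq_zero_or_pos k with hk0 | hk
  · -- k = 0: C = ⊥, the defining set is empty, sInf = 0
    subst hk0
    have hC : C = ⊥ := by
      rw [← hG.2, Set.range_eq_empty, Submodule.span_empty]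
    have hempty :
        {w | ∃ v ∈ C, (fun t => (v t).coeff 0) ≠ (0 : Fin n → F) ∧ w = wtTrunc j v} = ∅ := by
      ext w
      simp only [Set.mem_setOf_eq, Set.mem_empty_iff_false, iff_false, not_exists]
      rintro v ⟨hv, hne, -⟩
      rw [hC, Submodule.mem_bot] at hv
      subst hv
      exact hne (by funext t; simp)
    unfold colDist
    rw [hempty]
    simp
  · -- main case k ≥ 1
    set Φ := PhiL j G with hΦdef
    -- delay-freeness in coefficient form
    have hdf' : ∀ g : Fin k → F, (∀ t, ∑ i' : Fin k, g i' * (G i' t).coeff 0 = 0) →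
        ∀ i, g i = 0 := by
      intro g hg
      refine Fintype.linearIndependent_iff.mp hdf g ?_
      funext t
      simpa [Finset.sum_apply] using hg t
    -- key computation: Φ at level a, assuming coefficients below a vanish
    have hlevel : ∀ (c : (Fin (j+1) × Fin k) → F) (a : Fin (j+1)) (t : Fin n),
        (∀ b : Fin (j+1), (b : ℕ) < (a : ℕ) → ∀ i', c (b, i') = 0) →
        Φ c (a, t) = ∑ i' : Fin k, c (a, i') * (G i' t).coeff 0 := by
      intro c a t hlow
      have hdouble : ∑ q : Fin (j+1) × Fin k,
          c q * (if (q.1 : ℕ) ≤ (a : ℕ) then (G q.2 t).coeff ((a : ℕ) - (q.1 : ℕ)) else 0)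
          = ∑ b : Fin (j+1), ∑ i' : Fin k,
            c (b, i') * (if (b : ℕ) ≤ (a : ℕ) then (G i' t).coeff ((a : ℕ) - (b : ℕ)) else 0) :=
        Fintype.sum_prod_type _
      rw [hΦdef, PhiL_apply, hdouble]
      rw [Finset.sum_eq_single a (fun b _ hba => Finset.sum_eq_zero fun i' _ => by
            rcases lt_or_gt_of_ne (fun h : (b : ℕ) = (a : ℕ) => hba (Fin.ext h)) with h | h
            · rw [hlow b h i', zero_mul]
            · rw [if_neg (by omega), mul_zero])
          (fun h => absurd (Finset.mem_univ a) h)]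
      simp
    -- Φ is injective
    have hker : ∀ c : (Fin (j+1) × Fin k) → F, Φ c = 0 → c = 0 := by
      intro c hc
      have key : ∀ m : ℕ, ∀ a : Fin (j+1), (a : ℕ) = m → ∀ i, c (a, i) = 0 := by
        intro m
        induction m using Nat.strong_induction_on with
        | _ m ihm =>
          intro a ham i
          refine hdf' (fun i' => c (a, i')) (fun t => ?_) i
          rw [← hlevel c a t (fun b hb i' => ihm (b : ℕ) (by omega) b rfl i'), hc]
          rfl
      funext q
      exact key (q.1 : ℕ) q.1 rfl q.2
    have hΦinj : Function.Injective Φ :=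
      LinearMap.ker_eq_bot.mp (LinearMap.ker_eq_bot'.mpr hker)
    set U := LinearMap.range Φ with hUdef
    have hUr : Module.finrank F ↥U = (j + 1) * k := by
      rw [hUdef, LinearMap.finrank_range_of_inj hΦinj, Module.finrank_pi]
      simp
    -- the subspace of truncated codewords with zero constant term
    set π0k : ((Fin (j+1) × Fin k) → F) →ₗ[F] (Fin k → F) :=
      LinearMap.funLeft F F (fun i : Fin k => ((0 : Fin (j+1)), i)) with hπdef
    have hπsurj : Function.Surjective π0k :=
      LinearMap.funLeft_surjective_of_injective F F _
        (fun i i' h => by simpa using (Prod.mk.injEq _ _ _ _ ▸ h : _ ∧ _).2)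
    have hW0r : Module.finrank F ↥(LinearMap.ker π0k) = (j + 1) * k - k := by
      have h1 := LinearMap.finrank_range_add_finrank_ker π0k
      have h2 : LinearMap.range π0k = ⊤ := LinearMap.range_eq_top.mpr hπsurj
      rw [h2] at h1
      have h3 : Module.finrank F (↥(⊤ : Submodule F (Fin k → F))) = k := by
        rw [finrank_top, Module.finrank_pi]; simp
      rw [h3, Module.finrank_pi] at h1
      simp at h1
      omega
    set V0 : Submodule F ((Fin (j+1) × Fin n) → F) :=
      Submodule.map Φ (LinearMap.ker π0k) with hV0def
    have hV0r : Module.finrank F ↥V0 ≤ (j + 1) * k - k := by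
      rw [hV0def]
      exact le_trans (Submodule.finrank_map_le Φ _) (le_of_eq hW0r)
    obtain ⟨S0, hS0card, hS0⟩ := infoSetAux (Module.finrank F ↥V0) V0 le_rfl
    have hcardι : Fintype.card (Fin (j+1) × Fin n) = (j + 1) * n := by simp
    have hkn' : (j + 1) * k ≤ (j + 1) * n := Nat.mul_le_mul_left _ hkn
    have hK1 : 1 ≤ (j + 1) * k := Nat.one_le_iff_ne_zero.mpr (by positivity)
    have hPk : k ≤ (j + 1) * k := by
      calc k = 1 * k := (one_mul k).symm
        _ ≤ (j + 1) * k := Nat.mul_le_mul_right k (by omega)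
    obtain ⟨S, hS0S, hScard⟩ :=
      Finset.exists_superset_card_eq (s := S0) (n := (j + 1) * k - 1)
        (by omega) (by rw [hcardι]; omega)
    -- projection of U onto the coordinates in S
    set ψ : ↥U →ₗ[F] ({x // x ∈ S} → F) :=
      (LinearMap.funLeft F F (fun s : {x // x ∈ S} => (s : Fin (j+1) × Fin n))).comp
        U.subtype with hψdef
    have hrk := LinearMap.finrank_range_add_finrank_ker ψ
    have hrange : Module.finrank F ↥(LinearMap.range ψ) ≤ (j + 1) * k - 1 := by
      refine le_trans (Submodule.finrank_le _) ?_
      rw [Module.finrank_pi]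
      simp [hScard]
    have hkerne : LinearMap.ker ψ ≠ ⊥ := by
      intro hb
      rw [hb, finrank_bot, hUr] at hrk
      omega
    obtain ⟨x, hxker, hx0⟩ := Submodule.exists_mem_ne_zero_of_ne_bot hkerne
    have hvanish : ∀ p ∈ S, (x : (Fin (j+1) × Fin n) → F) p = 0 := by
      intro p hp
      have := congrFun (LinearMap.mem_ker.mp hxker) ⟨p, hp⟩
      simpa [hψdef] using this
    obtain ⟨c, hΦc⟩ := LinearMap.mem_range.mp x.2
    have hxne : (x : (Fin (j+1) × Fin n) → F) ≠ 0 := by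
      intro h
      exact hx0 (Subtype.ext h)
    -- the codeword
    set wvec : Fin n → Polynomial F := Fintype.linearCombination F (bFam j G) c with hwdef
    have hcoeff : ∀ (a : Fin (j+1)) (t : Fin n),
        (wvec t).coeff (a : ℕ) = (x : (Fin (j+1) × Fin n) → F) (a, t) :=
      fun a t => congrFun hΦc (a, t)
    -- wvec ∈ C
    have hbC : ∀ q : Fin (j+1) × Fin k, bFam j G q ∈ C := by
      intro q
      rw [← hG.2]
      have hrow : (fun t => G q.2 t) ∈
          Submodule.span (Polynomial F) (Set.range fun i : Fin k => fun t => G i t) :=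
        Submodule.subset_span ⟨q.2, rfl⟩
      have hsm := Submodule.smul_mem _ ((X : Polynomial F) ^ (q.1 : ℕ)) hrow
      have hb_eq : bFam j G q = (X : Polynomial F) ^ (q.1 : ℕ) • (fun t => G q.2 t) := by
        funext t
        simp [bFam, smul_eq_mul, mul_comm]
      rw [hb_eq]
      exact hsm
    have hwC : wvec ∈ C := by
      rw [hwdef, Fintype.linearCombination_apply]
      refine Submodule.sum_mem C fun q _ => ?_
      rw [← algebraMap_smul (Polynomial F) (c q) (bFam j G q)]
      exact Submodule.smul_mem C _ (hbC q)
    -- nonzero constant coefficient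
    have hne : (fun t => (wvec t).coeff 0) ≠ (0 : Fin n → F) := by
      intro h
      have hall : ∀ t, (x : (Fin (j+1) × Fin n) → F) ((0 : Fin (j+1)), t) = 0 := by
        intro t
        have h1 : (wvec t).coeff ((0 : Fin (j+1)) : ℕ) = 0 := by
          simpa using congrFun h t
        rw [← hcoeff 0 t, h1]
      have hc0 : ∀ i, c (0, i) = 0 := by
        refine hdf' (fun i => c ((0 : Fin (j+1)), i)) (fun t => ?_)
        have h1 := hlevel c 0 t (fun b hb i' => absurd hb (by simp [Fin.val_zero]))
        rw [hΦc] at h1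
        rw [hall t] at h1
        exact h1.symm
      have hcW0 : c ∈ LinearMap.ker π0k := by
        rw [LinearMap.mem_ker]
        funext i
        simpa [hπdef] using hc0 i
      have hxV0 : (x : (Fin (j+1) × Fin n) → F) ∈ V0 := ⟨c, hcW0, hΦc⟩
      exact hxne (hS0 _ hxV0 (fun p hp => hvanish p (hS0S hp)))
    -- weight bound
    have hwt : wtTrunc j wvec ≤ (n - k) * (j + 1) + 1 := by
      set A := {p : ℕ × Fin n | p.1 ≤ j ∧ (wvec p.2).coeff p.1 ≠ 0} with hAdef
      set f : ℕ × Fin n → Fin (j+1) × Fin n :=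
        fun p => (⟨min p.1 j, by omega⟩, p.2) with hfdef
      have hinjOn : Set.InjOn f A := by
        intro p hp p' hp' hpp
        have h1 : min p.1 j = min p'.1 j := by
          have := congrArg (fun q : Fin (j+1) × Fin n => (q.1 : ℕ)) hpp
          simpa [hfdef] using this
        have h2 : p.2 = p'.2 := by
          have := congrArg Prod.snd hpp
          simpa [hfdef] using this
        have hp1 : p.1 ≤ j := hp.1
        have hp'1 : p'.1 ≤ j := hp'.1
        exact Prod.ext (by omega) h2
      have himg : f '' A ⊆ ↑(Sᶜ) := by
        rintro _ ⟨p, hp, rfl⟩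
        simp only [Finset.coe_compl, Set.mem_compl_iff, Finset.mem_coe]
        intro hmem
        have hmin : min p.1 j = p.1 := min_eq_left hp.1
        have hcoef : (wvec p.2).coeff ((⟨min p.1 j, by omega⟩ : Fin (j+1)) : ℕ) =
            (x : (Fin (j+1) × Fin n) → F) (⟨min p.1 j, by omega⟩, p.2) :=
          hcoeff _ _
        apply hp.2
        have hv := hvanish _ hmem
        rw [← hv]
        rw [← hcoef]
        simp [hmin]
      have hcount : A.ncard ≤ (Sᶜ).card := by
        calc A.ncard = (f '' A).ncard := (Set.ncard_image_of_injOn hinjOn).symm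
          _ ≤ (↑(Sᶜ) : Set (Fin (j+1) × Fin n)).ncard :=
            Set.ncard_le_ncard himg (Finset.finite_toSet _)
          _ = (Sᶜ).card := Set.ncard_coe_finset _
      have hcompl : (Sᶜ).card = (j + 1) * n - ((j + 1) * k - 1) := by
        rw [Finset.card_compl, hScard, hcardι]
      have harith : (j + 1) * n - ((j + 1) * k - 1) ≤ (n - k) * (j + 1) + 1 := by
        have h1 : (n - k) * (j + 1) = n * (j + 1) - k * (j + 1) := Nat.sub_mul n k (j + 1)
        have h2 : n * (j + 1) = (j + 1) * n := Nat.mul_comm _ _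
        have h3 : k * (j + 1) = (j + 1) * k := Nat.mul_comm _ _
        rw [h1, h2, h3]
        omega
      calc wtTrunc j wvec = A.ncard := rfl
        _ ≤ (Sᶜ).card := hcount
        _ = (j + 1) * n - ((j + 1) * k - 1) := hcompl
        _ ≤ (n - k) * (j + 1) + 1 := harith
    -- conclude
    unfold colDist
    exact le_trans (Nat.sInf_le ⟨wvec, hwC, hne, rfl⟩) hwt
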